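/- arXiv:nlin/0111050 — 3 statements merged into one kernel-verified Lean document; each statement's English description precedes it below -/
import Mathlib

section
/- If h : ℝ → ℝ solves the Blasius equation h''' + (1/2)·h·h'' = 0 with h(0) = h'(0) = 0 and h''(0) = a > 0, then h''(ξ) = a·exp(−(1/2)∫₀^ξ h(t) dt) for all ξ, and in particular h''(ξ) > 0 for all ξ ≥ 0. -/
theorem stmt_2 (h : ℝ → ℝ) (a : ℝ) (ha : 0 < a) (hh : ContDiff ℝ 3 h)
    (hode : ∀ ξ ≥ (0:ℝ), iteratedDeriv 3 h ξ + (1/2) * h ξ * iteratedDeriv 2 h ξ = 0)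
    (h0 : h 0 = 0) (h1 : deriv h 0 = 0) (h2 : iteratedDeriv 2 h 0 = a) :
    ∀ ξ ≥ (0:ℝ), iteratedDeriv 2 h ξ = a * Real.exp (-(1/2) * ∫ t in (0:ℝ)..ξ, h t)
      ∧ 0 < iteratedDeriv 2 h ξ := by
  have hc : Continuous h := hh.continuous
  set F : ℝ → ℝ := fun x => ∫ t in (0:ℝ)..x, h t with hF
  have hFd : ∀ x : ℝ, HasDerivAt F (h x) x := fun x =>
    (hc.integral_hasStrictDerivAt 0 x).hasDerivAt
  have hH2 : ContDiff ℝ 1 (iteratedDeriv 2 h) := by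
    rw [iteratedDeriv_eq_iterate]
    exact hh.iterate_deriv' 1 2
  have hH2d : ∀ x : ℝ, HasDerivAt (iteratedDeriv 2 h) (iteratedDeriv 3 h x) x := by
    intro x
    have hd : Differentiable ℝ (iteratedDeriv 2 h) := hH2.differentiable one_ne_zero
    have := (hd x).hasDerivAt
    rwa [show iteratedDeriv 3 h x = deriv (iteratedDeriv 2 h) x from by
      rw [iteratedDeriv_succ]]
  set g : ℝ → ℝ := fun x => iteratedDeriv 2 h x * Real.exp ((1/2) * F x) with hg
  have hgd : ∀ x : ℝ, HasDerivAt g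
      (iteratedDeriv 3 h x * Real.exp ((1/2) * F x)
        + iteratedDeriv 2 h x * (Real.exp ((1/2) * F x) * ((1/2) * h x))) x := by
    intro x
    exact (hH2d x).mul ((((hFd x).const_mul (1/2)).exp))
  have hgzero : ∀ x ≥ (0:ℝ), HasDerivAt g 0 x := by
    intro x hx
    have := hgd x
    have e : iteratedDeriv 3 h x * Real.exp ((1/2) * F x)
        + iteratedDeriv 2 h x * (Real.exp ((1/2) * F x) * ((1/2) * h x))
        = (iteratedDeriv 3 h x + (1/2) * h x * iteratedDeriv 2 h x)
          * Real.exp ((1/2) * F x) := by ring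
    rw [e, hode x hx, zero_mul] at this
    exact this
  have hg0 : g 0 = a := by
    simp [hg, hF, h2, intervalIntegral.integral_same]
  intro ξ hξ
  have hconst : g ξ = a := by
    rcases eq_or_lt_of_le hξ with heq | hlt
    · rw [← heq]; exact hg0
    · have := constant_of_has_deriv_right_zero
        (f := g) (a := 0) (b := ξ)
        (fun x _ => ((hgd x).differentiableAt.continuousAt).continuousWithinAt)
        (fun x hx => ((hgzero x hx.1).hasDerivWithinAt))
        ξ (Set.right_mem_Icc.2 hξ)
      rw [this, hg0]
  have hexp : Real.exp ((1/2) * F ξ) ≠ 0 := Real.exp_ne_zero _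
  have key : iteratedDeriv 2 h ξ = a * Real.exp (-(1/2) * F ξ) := by
    have : iteratedDeriv 2 h ξ * Real.exp ((1/2) * F ξ) = a := hconst
    rw [show -(1/2 : ℝ) * F ξ = -((1/2) * F ξ) by ring, Real.exp_neg]
    field_simp
    ring_nf at this ⊢
    linarith [this]
  exact ⟨key, key ▸ mul_pos ha (Real.exp_pos _)⟩
end

section
/- If h : ℝ → ℝ solves the Blasius equation h''' + (1/2)·h·h'' = 0 on [0,∞) with h(0) = h'(0) = 0 and h''(0) > 0, then h' is strictly increasing on [0,∞) and h is strictly increasing on (0,∞). -/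
theorem stmt_3 (h : ℝ → ℝ) (hh : ContDiff ℝ 3 h)
    (hode : ∀ ξ ≥ (0:ℝ), iteratedDeriv 3 h ξ + (1/2) * h ξ * iteratedDeriv 2 h ξ = 0)
    (h0 : h 0 = 0) (h1 : deriv h 0 = 0) (h2 : 0 < iteratedDeriv 2 h 0) :
    StrictMonoOn (deriv h) (Set.Ici (0:ℝ)) ∧ StrictMonoOn h (Set.Ioi (0:ℝ)) := by
  have hc : Continuous h := hh.continuous
  set F : ℝ → ℝ := fun x => ∫ t in (0:ℝ)..x, h t with hF
  have hFd : ∀ x : ℝ, HasDerivAt F (h x) x := fun x =>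
    (hc.integral_hasStrictDerivAt 0 x).hasDerivAt
  -- h'' differentiable, deriv = h'''
  have hd2 : Differentiable ℝ (iteratedDeriv 2 h) :=
    hh.differentiable_iteratedDeriv 2 (by norm_num)
  have hd2' : ∀ x : ℝ, HasDerivAt (iteratedDeriv 2 h) (iteratedDeriv 3 h x) x := by
    intro x
    have := (hd2 x).hasDerivAt
    rwa [show iteratedDeriv 3 h = deriv (iteratedDeriv 2 h) from iteratedDeriv_succ] 
  set G : ℝ → ℝ := fun x => iteratedDeriv 2 h x * Real.exp ((1/2) * F x) with hG
  have hGd : ∀ x : ℝ, HasDerivAt G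
      ((iteratedDeriv 3 h x + (1/2) * h x * iteratedDeriv 2 h x) * Real.exp ((1/2) * F x)) x := by
    intro x
    have hE : HasDerivAt (fun y => Real.exp ((1/2) * F y))
        (Real.exp ((1/2) * F x) * ((1/2) * h x)) x :=
      (Real.hasDerivAt_exp _).comp x ((hFd x).const_mul (1/2))
    have : HasDerivAt (fun y => iteratedDeriv 2 h y * Real.exp ((1/2) * F y)) _ x := (hd2' x).mul hE
    convert this using 1
    ring
  -- G is constant on Ici 0
  have hGconst : ∀ x : ℝ, 0 ≤ x → G x = G 0 := by
    intro x hx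
    have := constant_of_has_deriv_right_zero (f := G) (a := 0) (b := x)
      (Continuous.continuousOn (by
        exact (hd2.continuous.mul ((Real.continuous_exp.comp
          ((continuous_const.mul (intervalIntegral.continuous_primitive
            (fun a b => hc.intervalIntegrable a b) 0))))))))
      (fun y hy => by
        have h0y : (0:ℝ) ≤ y := hy.1
        have := (hGd y).hasDerivWithinAt (s := Set.Ici y)
        rwa [hode y h0y, zero_mul] at this)
    exact this x ⟨hx, le_refl x⟩
  have hG0 : G 0 = iteratedDeriv 2 h 0 := by
    simp [hG, hF]
  -- h'' > 0 on Ici 0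
  have h2pos : ∀ x : ℝ, 0 ≤ x → 0 < iteratedDeriv 2 h x := by
    intro x hx
    have hGx : G x = iteratedDeriv 2 h 0 := (hGconst x hx).trans hG0
    have : iteratedDeriv 2 h x = iteratedDeriv 2 h 0 / Real.exp ((1/2) * F x) := by
      rw [← hGx]; field_simp [hG]
      simp only [hG]; ring_nf
    rw [this]
    positivity
  have hderiv2 : deriv (deriv h) = iteratedDeriv 2 h := by
    rw [iteratedDeriv_succ, iteratedDeriv_one]
  have hd1 : Continuous (deriv h) :=
    hh.continuous_deriv (by norm_num)
  have mono1 : StrictMonoOn (deriv h) (Set.Ici (0:ℝ)) := by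
    apply strictMonoOn_of_deriv_pos (convex_Ici 0) (hd1.continuousOn)
    intro x hx
    rw [interior_Ici] at hx
    rw [hderiv2]
    exact h2pos x (le_of_lt hx)
  refine ⟨mono1, ?_⟩
  have h1pos : ∀ x : ℝ, 0 < x → 0 < deriv h x := fun x hx => by
    have := mono1 (Set.self_mem_Ici) (le_of_lt hx : (0:ℝ) ≤ x) hx
    rwa [h1] at this
  have : StrictMonoOn h (Set.Ici (0:ℝ)) := by
    apply strictMonoOn_of_deriv_pos (convex_Ici 0) hc.continuousOn
    intro x hx
    rw [interior_Ici] at hx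
    exact h1pos x hx
  exact this.mono Set.Ioi_subset_Ici_self
end

section
/- Let h : [0,∞) → ℝ solve h''' + (1/2)h·h'' = 0 with h(0) = h'(0) = 0 and h''(0) = a > 0, and suppose h'(ξ) → 1 as ξ → ∞. Then for all ξ ≥ 0, 0 ≤ h'(ξ) < 1 and 0 ≤ h(ξ) ≤ ξ. -/
open Set Filter

theorem stmt_14 (h : ℝ → ℝ) (a : ℝ) (ha : 0 < a) (hh : ContDiff ℝ 3 h)
    (hode : ∀ ξ ≥ (0:ℝ), iteratedDeriv 3 h ξ + (1/2) * h ξ * iteratedDeriv 2 h ξ = 0)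
    (h0 : h 0 = 0) (h1 : deriv h 0 = 0) (h2 : iteratedDeriv 2 h 0 = a)
    (hlim : Filter.Tendsto (deriv h) Filter.atTop (nhds 1)) :
    ∀ ξ ≥ (0:ℝ), 0 ≤ deriv h ξ ∧ deriv h ξ < 1 ∧ 0 ≤ h ξ ∧ h ξ ≤ ξ := by
  have h3eq : (3 : WithTop ℕ∞) = 2 + 1 := by norm_num
  have hd1 : Differentiable ℝ h := hh.differentiable (by norm_num)
  have hh' : ContDiff ℝ 2 (deriv h) := (contDiff_succ_iff_deriv.mp (h3eq ▸ hh)).2.2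
  have hd2 : Differentiable ℝ (deriv h) := hh'.differentiable (by norm_num)
  have h2eq : (2 : WithTop ℕ∞) = 1 + 1 := by norm_num
  have hh'' : ContDiff ℝ 1 (deriv (deriv h)) := (contDiff_succ_iff_deriv.mp (h2eq ▸ hh')).2.2
  have hd3 : Differentiable ℝ (deriv (deriv h)) := hh''.differentiable (by norm_num)
  have hi2 : iteratedDeriv 2 h = deriv (deriv h) := by
    rw [show (2:ℕ) = 1 + 1 from rfl, iteratedDeriv_succ, iteratedDeriv_one]
  have hi3 : iteratedDeriv 3 h = deriv (deriv (deriv h)) := by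
    rw [show (3:ℕ) = 2 + 1 from rfl, iteratedDeriv_succ, hi2]
  set g := deriv (deriv h) with hgdef
  have hIc : Continuous h := hh.continuous
  set I : ℝ → ℝ := fun ξ => ∫ t in (0:ℝ)..ξ, h t with hIdef
  have hIder : ∀ ξ, HasDerivAt I (h ξ) ξ := fun ξ =>
    (hIc.integral_hasStrictDerivAt 0 ξ).hasDerivAt
  set F : ℝ → ℝ := fun ξ => g ξ * Real.exp ((1/2) * I ξ) with hFdef
  have hFder : ∀ ξ ≥ (0:ℝ), HasDerivAt F 0 ξ := by
    intro ξ hξ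
    have hA : HasDerivAt g (deriv g ξ) ξ := (hd3 ξ).hasDerivAt
    have hB : HasDerivAt (fun x => Real.exp ((1/2) * I x))
        (Real.exp ((1/2) * I ξ) * ((1/2) * h ξ)) ξ := ((hIder ξ).const_mul (1/2)).exp
    have hAB := hA.mul hB
    have hode' := hode ξ hξ
    rw [hi3, hi2] at hode'
    have hderg : deriv g ξ = -((1/2) * h ξ * g ξ) := by rw [hgdef]; linarith
    convert hAB using 1
    case e'_4 => rfl
    case e'_5 => rfl
    case e'_8 => rfl
    rw [hderg]; ring
  have hgpos : ∀ ξ ≥ (0:ℝ), 0 < g ξ := by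
    intro ξ hξ
    have hFc : ContinuousOn F (Icc 0 ξ) := by
      apply Continuous.continuousOn
      exact hd3.continuous.mul ((Real.continuous_exp.comp
        ((continuous_const).mul (continuous_iff_continuousAt.mpr fun x => (hIder x).continuousAt))))
    have hconst := constant_of_has_deriv_right_zero hFc
      (fun x hx => (hFder x hx.1).hasDerivWithinAt) ξ ⟨hξ, le_rfl⟩
    have hF0 : F 0 = a := by
      simp only [hFdef, hIdef, intervalIntegral.integral_same, mul_zero, Real.exp_zero, mul_one]
      exact hi2 ▸ h2
    rw [hF0] at hconst
    have hFx : g ξ * Real.exp ((1/2) * I ξ) = a := hconst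
    have hE := Real.exp_pos ((1/2) * I ξ)
    nlinarith [hFx, hE, ha]
  have hmono : StrictMonoOn (deriv h) (Ici (0:ℝ)) := by
    apply strictMonoOn_of_deriv_pos (convex_Ici 0) hd2.continuous.continuousOn
    intro x hx
    rw [interior_Ici] at hx
    exact hgpos x hx.le
  have hle1 : ∀ ξ ≥ (0:ℝ), deriv h ξ ≤ 1 := by
    intro ξ hξ
    refine ge_of_tendsto hlim ?_
    filter_upwards [eventually_ge_atTop ξ] with t ht
    rcases eq_or_lt_of_le ht with rfl | ht'
    · exact le_rfl
    · exact (hmono hξ (hξ.trans ht) ht').le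
  have hd1nn : ∀ ξ ≥ (0:ℝ), 0 ≤ deriv h ξ := by
    intro ξ hξ
    rcases eq_or_lt_of_le hξ with rfl | hξ'
    · rw [h1]
    · rw [← h1]; exact (hmono (le_refl (0:ℝ)) hξ hξ').le
  intro ξ hξ
  refine ⟨hd1nn ξ hξ, ?_, ?_, ?_⟩
  · exact lt_of_lt_of_le (hmono hξ (by linarith : (0:ℝ) ≤ ξ + 1) (by linarith))
      (hle1 (ξ + 1) (by linarith))
  · have hmh : MonotoneOn h (Ici (0:ℝ)) := by
      apply monotoneOn_of_deriv_nonneg (convex_Ici 0) hIc.continuousOn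
        (hd1.differentiableOn.mono interior_subset)
      intro x hx
      rw [interior_Ici] at hx
      exact hd1nn x hx.le
    have := hmh (le_refl (0:ℝ)) hξ hξ
    rwa [h0] at this
  · set φ : ℝ → ℝ := fun x => x - h x with hφdef
    have hmφ : MonotoneOn φ (Ici (0:ℝ)) := by
      apply monotoneOn_of_deriv_nonneg (convex_Ici 0)
        (continuous_id.sub hIc).continuousOn
        ((differentiable_id.sub hd1).differentiableOn.mono interior_subset)
      intro x hx
      rw [interior_Ici] at hx
      show 0 ≤ deriv (fun y => y - h y) x
      have hder : deriv (fun y => y - h y) x = 1 - deriv h x :=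
        ((hasDerivAt_id x).sub (hd1 x).hasDerivAt).deriv
      rw [hder]
      linarith [hle1 x hx.le]
    have := hmφ (le_refl (0:ℝ)) hξ hξ
    simp only [hφdef, h0, sub_zero] at this
    linarith
end
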